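/- There exists a constant C > 0 with the following property: for every analytic polynomial f(z) = Σ_{k≥0} a_k z^k of one variable, every positive integer n, and every complex number ζ with |ζ| = 1, one has Σ_{j=1}^n | Σ_{k≥0} a_{k+j} ζ^k |² ≤ C · n · (sup{ |f(z)| : |z| = 1 })². -/

import Mathlib

open Finset

/-- `f(z) = Σ_{k ≤ d} a_k z^k`. -/
noncomputable def polyEval1 (d : ℕ) (a : ℕ → ℂ) (z : ℂ) : ℂ :=
  ∑ k ∈ Finset.range (d + 1), a k * z ^ k

/-- `sup { |f(z)| : |z| = 1 }`. -/
noncomputable def supNormT1 (d : ℕ) (a : ℕ → ℂ) : ℝ :=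
  sSup {x : ℝ | ∃ z : ℂ, ‖z‖ = 1 ∧ x = ‖polyEval1 d a z‖}

/-- Triangle reindexing for a double sum vanishing beyond the antidiagonal `d`. -/
lemma triangle_sum (d : ℕ) (F : ℕ → ℕ → ℂ) (hF : ∀ j k, d < j + k → F j k = 0) :
    ∑ j ∈ range (d+1), ∑ k ∈ range (d+1), F j k
      = ∑ m ∈ range (d+1), ∑ i ∈ range (m+1), F i (m - i) := by
  rw [← Finset.sum_product']
  rw [show (∑ m ∈ range (d+1), ∑ i ∈ range (m+1), F i (m - i))
      = ∑ s ∈ (range (d+1)).sigma (fun m => range (m+1)), F s.2 (s.1 - s.2)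
    from Finset.sum_sigma' _ _ _]
  rw [← Finset.sum_filter_of_ne (p := fun p : ℕ × ℕ => p.1 + p.2 ≤ d)
      (by intro p _ h; by_contra hc; exact h (hF p.1 p.2 (lt_of_not_ge hc)))]
  apply Finset.sum_nbij' (i := fun p => ⟨p.1 + p.2, p.1⟩)
    (j := fun s : Σ _ : ℕ, ℕ => (s.2, s.1 - s.2))
  · intro p hp
    simp only [mem_filter, mem_product, mem_range] at hp
    simp only [mem_sigma, mem_range]
    omega
  · intro s hs
    simp only [mem_sigma, mem_range] at hs
    simp only [mem_filter, mem_product, mem_range]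
    omega
  · intro p hp
    simp only [mem_filter, mem_product, mem_range] at hp
    simp
  · intro s hs
    obtain ⟨m, i⟩ := s
    simp only [mem_sigma, mem_range] at hs
    have h : i + (m - i) = m := by omega
    simp [h]
  · intro p hp; simp

/-- Generating function identity for the backward shifts. -/
lemma genfun (d : ℕ) (a : ℕ → ℂ) (ha : ∀ k, d < k → a k = 0) (ζ w : ℂ) :
    (w - ζ) * ∑ j ∈ range (d+1), (∑ k ∈ range (d+1), a (k+j) * ζ^k) * w^j
      = w * polyEval1 d a w - ζ * polyEval1 d a ζ := by
  have h1 : ∑ j ∈ range (d+1), (∑ k ∈ range (d+1), a (k+j) * ζ^k) * w^j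
      = ∑ j ∈ range (d+1), ∑ k ∈ range (d+1), a (j+k) * w^j * ζ^k := by
    refine Finset.sum_congr rfl fun j _ => ?_
    rw [Finset.sum_mul]
    refine Finset.sum_congr rfl fun k _ => ?_
    rw [add_comm k j]; ring
  rw [h1, triangle_sum d _ (fun j k h => by rw [ha _ h, zero_mul, zero_mul])]
  have h2 : ∀ m ∈ range (d+1), ∑ i ∈ range (m+1), a (i + (m - i)) * w^i * ζ^(m-i)
      = a m * ∑ i ∈ range (m+1), w^i * ζ^(m-i) := by
    intro m _
    rw [Finset.mul_sum]
    refine Finset.sum_congr rfl fun i hi => ?_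
    rw [mem_range] at hi
    have : i + (m - i) = m := by omega
    rw [this]; ring
  rw [Finset.sum_congr rfl h2, Finset.mul_sum]
  have h3 : ∀ m ∈ range (d+1), (w - ζ) * (a m * ∑ i ∈ range (m+1), w^i * ζ^(m-i))
      = a m * w^(m+1) - a m * ζ^(m+1) := by
    intro m _
    have key := geom_sum₂_mul w ζ (m+1)
    simp only [Nat.add_sub_cancel] at key
    calc (w - ζ) * (a m * ∑ i ∈ range (m+1), w^i * ζ^(m-i))
        = a m * ((∑ i ∈ range (m+1), w^i * ζ^(m-i)) * (w - ζ)) := by ring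
      _ = a m * (w^(m+1) - ζ^(m+1)) := by rw [key]
      _ = _ := by ring
  rw [Finset.sum_congr rfl h3, Finset.sum_sub_distrib]
  unfold polyEval1
  rw [Finset.mul_sum, Finset.mul_sum]
  congr 1 <;> exact Finset.sum_congr rfl fun m _ => by ring

/-- Discrete Parseval identity at the `N`-th roots of unity. -/
lemma parseval (N : ℕ) (hN : 0 < N) (c : ℕ → ℂ) :
    ∑ ℓ ∈ range N, Complex.normSq (∑ j ∈ range N,
        c j * Complex.exp (2 * Real.pi * Complex.I / N) ^ (ℓ * j))
      = N * ∑ j ∈ range N, Complex.normSq (c j) := by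
  set ω : ℂ := Complex.exp (2 * Real.pi * Complex.I / N) with hω
  have hprim : IsPrimitiveRoot ω N := Complex.isPrimitiveRoot_exp N hN.ne'
  have hωN : ω ^ N = 1 := hprim.pow_eq_one
  have habs : ‖ω‖ = 1 := by
    rw [hω, Complex.norm_exp]
    have : (2 * Real.pi * Complex.I / N).re = 0 := by
      simp [Complex.div_re]
    rw [this, Real.exp_zero]
  have hcj : ω * (starRingEnd ℂ) ω = 1 := by
    rw [Complex.mul_conj, ← Complex.sq_norm, habs]; norm_num
  have key : ∀ j ∈ range N, ∀ k ∈ range N,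
      ∑ ℓ ∈ range N, (ω ^ j * (starRingEnd ℂ) ω ^ k) ^ ℓ
        = if j = k then (N : ℂ) else 0 := by
    intro j hj k hk
    rw [mem_range] at hj hk
    by_cases h : j = k
    · subst h
      have : ω ^ j * (starRingEnd ℂ) ω ^ j = 1 := by
        rw [← mul_pow, hcj, one_pow]
      simp [this]
    · rw [if_neg h]
      set x : ℂ := ω ^ j * (starRingEnd ℂ) ω ^ k with hx
      have hxN : x ^ N = 1 := by
        rw [hx, mul_pow, ← pow_mul, ← pow_mul, mul_comm j N, mul_comm k N,
          pow_mul, pow_mul, hωN, ← map_pow, hωN]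
        simp
      have hx1 : x ≠ 1 := by
        intro hc
        apply h
        refine hprim.pow_inj hj hk ?_
        have : ω ^ j * ((starRingEnd ℂ) ω ^ k * ω ^ k) = ω ^ k := by
          rw [← mul_assoc, ← hx, hc, one_mul]
        rwa [← mul_pow, mul_comm ((starRingEnd ℂ) ω) ω, hcj, one_pow, mul_one] at this
      rw [geom_sum_eq hx1, hxN, sub_self, zero_div]
  have main : ∑ ℓ ∈ range N, ((∑ j ∈ range N, c j * ω ^ (ℓ * j)) *
        (starRingEnd ℂ) (∑ j ∈ range N, c j * ω ^ (ℓ * j)))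
      = (N : ℂ) * ∑ j ∈ range N, (c j * (starRingEnd ℂ) (c j)) := by
    have expand : ∀ ℓ, (∑ j ∈ range N, c j * ω ^ (ℓ * j)) *
          (starRingEnd ℂ) (∑ j ∈ range N, c j * ω ^ (ℓ * j))
        = ∑ j ∈ range N, ∑ k ∈ range N,
            (c j * (starRingEnd ℂ) (c k)) * (ω ^ j * (starRingEnd ℂ) ω ^ k) ^ ℓ := by
      intro ℓ
      rw [map_sum, Finset.sum_mul_sum]
      refine Finset.sum_congr rfl fun j _ => Finset.sum_congr rfl fun k _ => ?_
      rw [map_mul, map_pow]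
      rw [mul_pow, ← pow_mul, ← pow_mul, mul_comm j ℓ, mul_comm k ℓ]
      ring
    rw [Finset.sum_congr rfl fun ℓ _ => expand ℓ]
    rw [Finset.sum_comm]
    rw [Finset.sum_congr rfl fun j hj => Finset.sum_comm]
    have : ∀ j ∈ range N, ∑ k ∈ range N, ∑ ℓ ∈ range N,
          (c j * (starRingEnd ℂ) (c k)) * (ω ^ j * (starRingEnd ℂ) ω ^ k) ^ ℓ
        = (N : ℂ) * (c j * (starRingEnd ℂ) (c j)) := by
      intro j hj
      have h4 : ∀ k ∈ range N, ∑ ℓ ∈ range N,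
            (c j * (starRingEnd ℂ) (c k)) * (ω ^ j * (starRingEnd ℂ) ω ^ k) ^ ℓ
          = (c j * (starRingEnd ℂ) (c k)) * (if j = k then (N : ℂ) else 0) := by
        intro k hk
        rw [← Finset.mul_sum, key j hj k hk]
      rw [Finset.sum_congr rfl h4]
      simp only [mul_ite, mul_zero]
      rw [Finset.sum_ite_eq (range N) j (fun k => c j * (starRingEnd ℂ) (c k) * (N:ℂ)),
        if_pos hj]
      ring
    rw [Finset.sum_congr rfl this, ← Finset.mul_sum]
  have cast1 : ((∑ ℓ ∈ range N, Complex.normSq (∑ j ∈ range N, c j * ω ^ (ℓ * j)) : ℝ) : ℂ)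
      = ∑ ℓ ∈ range N, ((∑ j ∈ range N, c j * ω ^ (ℓ * j)) *
        (starRingEnd ℂ) (∑ j ∈ range N, c j * ω ^ (ℓ * j))) := by
    push_cast
    exact Finset.sum_congr rfl fun ℓ _ => (Complex.mul_conj _).symm
  have cast2 : (((N : ℝ) * ∑ j ∈ range N, Complex.normSq (c j) : ℝ) : ℂ)
      = (N : ℂ) * ∑ j ∈ range N, (c j * (starRingEnd ℂ) (c j)) := by
    push_cast
    rw [Finset.sum_congr rfl fun j _ => (Complex.mul_conj (c j)).symm]
  exact_mod_cast cast1.trans (main.trans cast2.symm)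

/-- Every value on the closed unit disc is bounded by the sup norm on the circle. -/
lemma maxmod (d : ℕ) (a : ℕ → ℂ) :
    ∀ w : ℂ, ‖w‖ ≤ 1 → ‖polyEval1 d a w‖ ≤ supNormT1 d a := by
  have hbdd : BddAbove {x : ℝ | ∃ z : ℂ, ‖z‖ = 1 ∧
      x = ‖polyEval1 d a z‖} := by
    refine ⟨∑ k ∈ range (d+1), ‖a k‖, ?_⟩
    rintro x ⟨z, hz, rfl⟩
    unfold polyEval1
    refine le_trans (norm_sum_le _ _) (le_of_eq ?_)
    refine Finset.sum_congr rfl fun k _ => ?_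
    rw [norm_mul, norm_pow, hz, one_pow, mul_one]
  have hcirc : ∀ z : ℂ, ‖z‖ = 1 →
      ‖polyEval1 d a z‖ ≤ supNormT1 d a := by
    intro z hz
    exact le_csSup hbdd ⟨z, hz, rfl⟩
  intro w hw
  have hdiff : Differentiable ℂ (polyEval1 d a) := by
    unfold polyEval1
    exact Differentiable.fun_sum fun k _ => (differentiable_pow k).const_mul _
  have := Complex.norm_le_of_forall_mem_frontier_norm_le
    (U := Metric.ball (0:ℂ) 1) Metric.isBounded_ball
    hdiff.diffContOnCl (C := supNormT1 d a) ?_ (z := w) ?_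
  · exact this
  · intro z hz
    rw [frontier_ball (0:ℂ) one_ne_zero, mem_sphere_zero_iff_norm] at hz
    exact hcirc z hz
  · rw [closure_ball (0:ℂ) one_ne_zero, mem_closedBall_zero_iff]
    exact hw


set_option maxHeartbeats 1600000 in
theorem backward_shifts_square_sum_estimate :
    ∃ C : ℝ, 0 < C ∧
      ∀ (d : ℕ) (a : ℕ → ℂ), (∀ k : ℕ, d < k → a k = 0) →
        ∀ n : ℕ, 0 < n → ∀ ζ : ℂ, ‖ζ‖ = 1 →
          ∑ j ∈ Finset.Icc 1 n,
              (‖polyEval1 d (fun k => a (k + j)) ζ‖) ^ 2 ≤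
            C * n * (supNormT1 d a) ^ 2 := by
  refine ⟨288, by norm_num, ?_⟩
  intro d a ha n hn ζ hζ
  set M := supNormT1 d a with hMdef
  have hbd : ∀ w : ℂ, ‖w‖ ≤ 1 → ‖polyEval1 d a w‖ ≤ M := maxmod d a
  have hM0 : 0 ≤ M := le_trans (norm_nonneg _) (hbd 1 (by simp))
  set N := max (d+1) (n+1) with hNdef
  have hN0 : 0 < N := lt_of_lt_of_le (Nat.succ_pos d) (le_max_left _ _)
  have hNd : d + 1 ≤ N := le_max_left _ _
  have hNn : n + 1 ≤ N := le_max_right _ _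
  -- the radius r
  set r : ℝ := 1 - 1/(2*n) with hrdef
  have hn1 : (1:ℝ) ≤ (n:ℝ) := by exact_mod_cast hn
  have hnpos : (0:ℝ) < (n:ℝ) := by linarith
  have h2n : (0:ℝ) < 2*n := by linarith
  have hhalf : 1/(2*(n:ℝ)) ≤ 1/2 := by
    rw [div_le_div_iff₀ h2n (by norm_num)]; linarith
  have hhalfpos : 0 < 1/(2*(n:ℝ)) := by positivity
  have hr0 : (0:ℝ) < r := by rw [hrdef]; linarith
  have hr1 : r ≤ 1 := by rw [hrdef]; linarith
  have hr1' : r < 1 := by rw [hrdef]; linarith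
  have hrn_lb : (1:ℝ)/2 ≤ r^n := by
    have h := one_add_mul_le_pow (a := -(1/(2*(n:ℝ)))) (by linarith) n
    have heq : (1:ℝ) + (n:ℝ) * (-(1/(2*(n:ℝ)))) = 1/2 := by
      field_simp; ring
    rw [heq] at h
    simpa [hrdef, sub_eq_add_neg] using h
  have hrn_ub : r^n ≤ 2/3 := by
    have hb : (3:ℝ)/2 ≤ (1 + 1/(2*(n:ℝ)))^n := by
      have h := one_add_mul_le_pow (a := 1/(2*(n:ℝ))) (by linarith) n
      have heq : (1:ℝ) + (n:ℝ) * (1/(2*(n:ℝ))) = 3/2 := by field_simp; ring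
      linarith [heq ▸ h]
    have hprod : r^n * (1 + 1/(2*(n:ℝ)))^n ≤ 1 := by
      rw [← mul_pow]
      have he : r * (1 + 1/(2*(n:ℝ))) = 1 - (1/(2*(n:ℝ)))^2 := by rw [hrdef]; ring
      rw [he]
      apply pow_le_one₀ (by nlinarith) (by nlinarith)
    nlinarith [pow_nonneg (le_of_lt hr0) n]
  have hrpow : ∀ j ∈ Finset.Icc 1 n, (1:ℝ)/2 ≤ r^j := by
    intro j hj
    rw [Finset.mem_Icc] at hj
    exact le_trans hrn_lb (pow_le_pow_of_le_one (le_of_lt hr0) hr1 hj.2)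
  have hrN : r^N ≤ 2/3 :=
    le_trans (pow_le_pow_of_le_one (le_of_lt hr0) hr1 (le_trans (Nat.le_succ n) hNn)) hrn_ub
  -- key complex quantities
  set ω : ℂ := Complex.exp (2 * Real.pi * Complex.I / N) with hωdef
  have hprim : IsPrimitiveRoot ω N := Complex.isPrimitiveRoot_exp N hN0.ne'
  have hωN : ω ^ N = 1 := hprim.pow_eq_one
  have hωabs : ‖ω‖ = 1 := by
    rw [hωdef, Complex.norm_exp]
    have : (2 * Real.pi * Complex.I / N).re = 0 := by simp [Complex.div_re]
    rw [this, Real.exp_zero]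
  have hζ1 : ζ * (starRingEnd ℂ) ζ = 1 := by
    rw [Complex.mul_conj, ← Complex.sq_norm, hζ]; norm_num
  set b : ℕ → ℂ := fun j => polyEval1 d (fun k => a (k + j)) ζ with hbdef
  set c : ℕ → ℂ := fun j => b j * (r:ℂ)^j with hcdef
  set q : ℕ → ℂ := fun k => (r:ℂ)^k * ((starRingEnd ℂ) ζ)^(k+1) with hqdef
  have hbv : ∀ j, b j = ∑ k ∈ range (d+1), a (k+j) * ζ^k := fun j => rfl
  have hb0 : ∀ j, d < j → b j = 0 := by
    intro j hj
    rw [hbv j]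
    exact Finset.sum_eq_zero fun k _ => by rw [ha (k+j) (by omega), zero_mul]
  have hbv2 : ∀ j, polyEval1 d (fun k => a (k + j)) ζ = b j := fun j => rfl
  have hcv : ∀ j, c j = b j * (r:ℂ)^j := fun j => rfl
  have hqv : ∀ k, q k = (r:ℂ)^k * ((starRingEnd ℂ) ζ)^(k+1) := fun k => rfl
  clear_value M N r ω b c q
  -- values of G at roots of unity
  have hGval : ∀ ℓ : ℕ, ∑ j ∈ range N, c j * ω ^ (ℓ * j)
      = ∑ j ∈ range (d+1), (∑ k ∈ range (d+1), a (k+j) * ζ^k) * ((r:ℂ) * ω^ℓ)^j := by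
    intro ℓ
    rw [← Finset.sum_subset (Finset.range_subset_range.mpr hNd)
      (fun j _ hj => by
        rw [mem_range, not_lt] at hj
        have hz : b j = 0 := hb0 j (by omega)
        rw [hcv j, hz, zero_mul, zero_mul])]
    refine Finset.sum_congr rfl fun j hj => ?_
    rw [hcv j, hbv j, mul_pow, pow_mul]
    ring
  -- pointwise bound on G
  have hGbd : ∀ ℓ : ℕ, Complex.normSq (∑ j ∈ range N, c j * ω ^ (ℓ * j))
      * Complex.normSq ((r:ℂ) * ω^ℓ - ζ) ≤ (2*M)^2 := by
    intro ℓ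
    rw [← Complex.normSq_mul]
    have hid : (∑ j ∈ range (d+1), (∑ k ∈ range (d+1), a (k+j) * ζ^k) * ((r:ℂ) * ω^ℓ)^j)
        * ((r:ℂ) * ω^ℓ - ζ)
        = (r:ℂ) * ω^ℓ * polyEval1 d a ((r:ℂ) * ω^ℓ) - ζ * polyEval1 d a ζ := by
      rw [mul_comm]; exact genfun d a ha ζ ((r:ℂ) * ω^ℓ)
    rw [hGval ℓ, hid]
    have habsw : ‖(r:ℂ) * ω^ℓ‖ = r := by
      rw [norm_mul, norm_pow, hωabs, one_pow, mul_one, Complex.norm_real, Real.norm_eq_abs, abs_of_pos hr0]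
    have h1 : ‖(r:ℂ) * ω^ℓ * polyEval1 d a ((r:ℂ) * ω^ℓ)‖ ≤ M := by
      rw [norm_mul, habsw]
      calc r * ‖polyEval1 d a ((r:ℂ) * ω^ℓ)‖
          ≤ 1 * M := mul_le_mul hr1 (hbd _ (le_of_eq_of_le habsw hr1))
            (norm_nonneg _) (by norm_num)
        _ = M := one_mul M
    have h2 : ‖ζ * polyEval1 d a ζ‖ ≤ M := by
      rw [norm_mul, hζ, one_mul]
      exact hbd ζ (le_of_eq hζ)
    have htri : ‖(r:ℂ) * ω^ℓ * polyEval1 d a ((r:ℂ) * ω^ℓ)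
        - ζ * polyEval1 d a ζ‖ ≤ 2*M := by
      refine le_trans ?_ (by linarith : ‖(r:ℂ) * ω^ℓ * polyEval1 d a ((r:ℂ) * ω^ℓ)‖
        + ‖ζ * polyEval1 d a ζ‖ ≤ 2*M)
      simpa [sub_eq_add_neg, map_neg] using
        norm_add_le ((r:ℂ) * ω^ℓ * polyEval1 d a ((r:ℂ) * ω^ℓ))
          (-(ζ * polyEval1 d a ζ))
    rw [← Complex.sq_norm]
    exact pow_le_pow_left₀ (norm_nonneg _) htri 2
  -- kernel bound
  have hQbd : ∀ ℓ : ℕ, (1:ℝ)/9 ≤ Complex.normSq ((r:ℂ) * ω^ℓ - ζ)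
      * Complex.normSq (∑ k ∈ range N, q k * ω ^ (ℓ * k)) := by
    intro ℓ
    set x : ℂ := (r:ℂ) * (starRingEnd ℂ) ζ * ω^ℓ with hxdef
    have hQx : ∑ k ∈ range N, q k * ω ^ (ℓ * k)
        = (starRingEnd ℂ) ζ * ∑ k ∈ range N, x^k := by
      rw [Finset.mul_sum]
      refine Finset.sum_congr rfl fun k _ => ?_
      rw [hqv k, hxdef, mul_pow, mul_pow, pow_mul]
      ring
    have hxN : x^N = (r:ℂ)^N * ((starRingEnd ℂ) ζ)^N := by
      rw [hxdef, mul_pow, mul_pow, ← pow_mul, mul_comm ℓ N, pow_mul, hωN, one_pow, mul_one]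
    have hid : (ζ - (r:ℂ) * ω^ℓ) * (∑ k ∈ range N, q k * ω^(ℓ*k))
        = 1 - (r:ℂ)^N * ((starRingEnd ℂ) ζ)^N := by
      rw [hQx]
      have h1x : (ζ - (r:ℂ)*ω^ℓ) * (starRingEnd ℂ) ζ = 1 - x := by
        rw [hxdef]
        calc (ζ - (r:ℂ)*ω^ℓ) * (starRingEnd ℂ) ζ
            = ζ * (starRingEnd ℂ) ζ - (r:ℂ) * (starRingEnd ℂ) ζ * ω^ℓ := by ring
          _ = 1 - (r:ℂ) * (starRingEnd ℂ) ζ * ω^ℓ := by rw [hζ1]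
      calc (ζ - (r:ℂ)*ω^ℓ) * ((starRingEnd ℂ) ζ * ∑ k ∈ range N, x^k)
          = ((ζ - (r:ℂ)*ω^ℓ) * (starRingEnd ℂ) ζ) * ∑ k ∈ range N, x^k := by ring
        _ = (1-x) * ∑ k ∈ range N, x^k := by rw [h1x]
        _ = -((∑ k ∈ range N, x^k) * (x - 1)) := by ring
        _ = -(x^N - 1) := by rw [geom_sum_mul]
        _ = 1 - x^N := by ring
        _ = 1 - (r:ℂ)^N * ((starRingEnd ℂ) ζ)^N := by rw [hxN]
    have habsxN : ‖(r:ℂ)^N * ((starRingEnd ℂ) ζ)^N‖ = r^N := by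
      rw [norm_mul, norm_pow, norm_pow, Complex.norm_real, Real.norm_eq_abs, abs_of_pos hr0,
        Complex.norm_conj, hζ, one_pow, mul_one]
    have hlow : (1:ℝ)/3 ≤ ‖1 - (r:ℂ)^N * ((starRingEnd ℂ) ζ)^N‖ := by
      have h := norm_sub_norm_le 1 ((r:ℂ)^N * ((starRingEnd ℂ) ζ)^N)
      rw [norm_one, habsxN] at h
      linarith
    have hkey : Complex.normSq ((r:ℂ) * ω^ℓ - ζ)
        * Complex.normSq (∑ k ∈ range N, q k * ω^(ℓ*k))
        = Complex.normSq (1 - (r:ℂ)^N * ((starRingEnd ℂ) ζ)^N) := by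
      rw [← Complex.normSq_mul]
      rw [show ((r:ℂ) * ω^ℓ - ζ) * (∑ k ∈ range N, q k * ω^(ℓ*k))
        = -((ζ - (r:ℂ) * ω^ℓ) * (∑ k ∈ range N, q k * ω^(ℓ*k))) by ring, hid]
      rw [Complex.normSq_neg]
    rw [hkey, ← Complex.sq_norm]
    nlinarith [hlow]
  -- combine pointwise
  have hcomb : ∀ ℓ ∈ range N, Complex.normSq (∑ j ∈ range N, c j * ω^(ℓ*j))
      ≤ 36 * M^2 * Complex.normSq (∑ k ∈ range N, q k * ω^(ℓ*k)) := by
    intro ℓ _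
    have h1 := hGbd ℓ
    have h2 := hQbd ℓ
    have hA := Complex.normSq_nonneg (∑ j ∈ range N, c j * ω^(ℓ*j))
    have hQ := Complex.normSq_nonneg (∑ k ∈ range N, q k * ω^(ℓ*k))
    have hB := Complex.normSq_nonneg ((r:ℂ) * ω^ℓ - ζ)
    have h3 := mul_le_mul_of_nonneg_left h2 hA
    have h4 := mul_le_mul_of_nonneg_right h1 hQ
    have h5 : (2*M)^2 * Complex.normSq (∑ k ∈ range N, q k * ω^(ℓ*k))
        = 4 * (M^2 * Complex.normSq (∑ k ∈ range N, q k * ω^(ℓ*k))) := by ring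
    have h6 : Complex.normSq (∑ j ∈ range N, c j * ω^(ℓ*j))
        * (Complex.normSq ((r:ℂ) * ω^ℓ - ζ)
          * Complex.normSq (∑ k ∈ range N, q k * ω^(ℓ*k)))
        = Complex.normSq (∑ j ∈ range N, c j * ω^(ℓ*j))
          * Complex.normSq ((r:ℂ) * ω^ℓ - ζ)
          * Complex.normSq (∑ k ∈ range N, q k * ω^(ℓ*k)) := by ring
    rw [h6] at h3
    rw [h5] at h4
    have h7 : Complex.normSq (∑ j ∈ range N, c j * ω^(ℓ*j)) * (1/9)
        ≤ 4 * (M^2 * Complex.normSq (∑ k ∈ range N, q k * ω^(ℓ*k))) := le_trans h3 h4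
    have h8 : 36 * M^2 * Complex.normSq (∑ k ∈ range N, q k * ω^(ℓ*k))
        = 9 * (4 * (M^2 * Complex.normSq (∑ k ∈ range N, q k * ω^(ℓ*k)))) := by ring
    rw [h8]
    linarith
  -- sum everything
  have hsum : (N:ℝ) * ∑ j ∈ range N, Complex.normSq (c j)
      ≤ 36 * M^2 * ((N:ℝ) * ∑ k ∈ range N, Complex.normSq (q k)) := by
    rw [← parseval N hN0 c, ← parseval N hN0 q, ← hωdef, Finset.mul_sum]
    exact Finset.sum_le_sum hcomb
  have hq_sum : ∑ k ∈ range N, Complex.normSq (q k) ≤ 2*(n:ℝ) := by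
    have hterm : ∀ k ∈ range N, Complex.normSq (q k) = (r^2)^k := by
      intro k _
      rw [hqv k, Complex.normSq_mul, ← Complex.ofReal_pow, Complex.normSq_ofReal]
      have : Complex.normSq (((starRingEnd ℂ) ζ)^(k+1)) = 1 := by
        rw [map_pow, Complex.normSq_conj, ← Complex.sq_norm, hζ]; norm_num
      rw [this, mul_one, ← sq, ← pow_mul, ← pow_mul, mul_comm k 2]
    rw [Finset.sum_congr rfl hterm]
    have hx0 : (0:ℝ) ≤ r^2 := sq_nonneg r
    have hx1 : r^2 < 1 := by nlinarith
    have hgeo := geom_sum_eq (ne_of_lt hx1) N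
    rw [hgeo]
    have hd : (0:ℝ) < 1 - r^2 := by linarith
    rw [div_le_iff_of_neg (by linarith : r^2 - 1 < 0)]
    have hrr : 1 - r^2 ≥ 1/(2*(n:ℝ)) := by
      have : r^2 ≤ r := by nlinarith
      rw [hrdef] at this ⊢
      linarith
    have hxN0 : (0:ℝ) ≤ (r^2)^N := pow_nonneg hx0 N
    have : 2*(n:ℝ) * (1 - r^2) ≥ 1 := by
      calc 2*(n:ℝ) * (1 - r^2) ≥ 2*(n:ℝ) * (1/(2*(n:ℝ))) := by
            apply mul_le_mul_of_nonneg_left hrr (by linarith)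
        _ = 1 := by field_simp
    nlinarith
  -- lower bound of LHS
  have hsubset : Finset.Icc 1 n ⊆ range N := by
    intro j hj
    rw [Finset.mem_Icc] at hj
    rw [mem_range]
    omega
  have hlhs : ∑ j ∈ Finset.Icc 1 n, ‖b j‖^2
      ≤ 4 * ∑ j ∈ range N, Complex.normSq (c j) := by
    have h1 : ∀ j ∈ Finset.Icc 1 n, ‖b j‖^2 ≤ 4 * Complex.normSq (c j) := by
      intro j hj
      rw [Complex.sq_norm]
      have hcj : Complex.normSq (c j) = Complex.normSq (b j) * (r^j)^2 := by
        rw [hcv j, Complex.normSq_mul, ← Complex.ofReal_pow, Complex.normSq_ofReal, sq]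
      rw [hcj]
      have h14 := hrpow j hj
      have hrj0 : (0:ℝ) ≤ r^j := pow_nonneg hr0.le j
      have h15 : (1:ℝ)/4 ≤ (r^j)^2 := by nlinarith
      have h16 := mul_le_mul_of_nonneg_left h15 (Complex.normSq_nonneg (b j))
      linarith
    calc ∑ j ∈ Finset.Icc 1 n, ‖b j‖^2
        ≤ ∑ j ∈ Finset.Icc 1 n, 4 * Complex.normSq (c j) := Finset.sum_le_sum h1
      _ = 4 * ∑ j ∈ Finset.Icc 1 n, Complex.normSq (c j) := by rw [Finset.mul_sum]
      _ ≤ 4 * ∑ j ∈ range N, Complex.normSq (c j) := by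
          apply mul_le_mul_of_nonneg_left _ (by norm_num)
          exact Finset.sum_le_sum_of_subset_of_nonneg hsubset
            (fun j _ _ => Complex.normSq_nonneg _)
  -- finish
  have hNpos : (0:ℝ) < (N:ℝ) := by exact_mod_cast hN0
  have hX : ∑ j ∈ range N, Complex.normSq (c j) ≤ 36*M^2*(2*(n:ℝ)) := by
    have h := hsum
    have h2 : (N:ℝ) * ∑ j ∈ range N, Complex.normSq (c j)
        ≤ (N:ℝ) * (36*M^2*(2*(n:ℝ))) := by
      calc (N:ℝ) * ∑ j ∈ range N, Complex.normSq (c j)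
          ≤ 36 * M^2 * ((N:ℝ) * ∑ k ∈ range N, Complex.normSq (q k)) := h
        _ ≤ 36 * M^2 * ((N:ℝ) * (2*(n:ℝ))) := by
            apply mul_le_mul_of_nonneg_left _ (by positivity)
            exact mul_le_mul_of_nonneg_left hq_sum (le_of_lt hNpos)
        _ = (N:ℝ) * (36*M^2*(2*(n:ℝ))) := by ring
    exact le_of_mul_le_mul_left h2 hNpos
  calc ∑ j ∈ Finset.Icc 1 n, (‖polyEval1 d (fun k => a (k + j)) ζ‖) ^ 2
      = ∑ j ∈ Finset.Icc 1 n, ‖b j‖^2 :=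
        Finset.sum_congr rfl fun j _ => by rw [hbv2 j]
    _ ≤ 4 * ∑ j ∈ range N, Complex.normSq (c j) := hlhs
    _ ≤ 4 * (36*M^2*(2*(n:ℝ))) := by linarith
    _ = 288 * (n:ℝ) * M^2 := by ring
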